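/- For a locally integrable function f : (0,Z) → ℝ define (𝔇^{−2}f)(z) := z^{−2/3} ∫₀^z ( ∫₀^{w} t^{−2/3} f(t) dt ) dw, and inductively 𝔇^{−2m} := 𝔇^{−2} ∘ 𝔇^{−2(m−1)} for m ≥ 2. For every integer m ≥ 1 there exists a constant C = C(m) > 0 such that for every Z > 0, every measurable f : (0,Z) → ℝ with ∫₀^Z f(t)² t^{−2/3} dt < ∞, and every z ∈ (0,Z]: |𝔇^{−2m} f(z)| ≤ C · z^{2m/3 − 1/6} · ( ∫₀^Z f(t)² t^{−2/3} dt )^{1/2}. -/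

import Mathlib

open MeasureTheory

/-- The right inverse `𝔇⁻²` of the weighted operator `𝔇²`, normalized so that
`𝔇⁻²f(0) = 0`. -/
noncomputable def Dinv2 (f : ℝ → ℝ) : ℝ → ℝ := fun z =>
  z ^ (-(2:ℝ)/3) * ∫ w in (0:ℝ)..z, (∫ t in (0:ℝ)..w, t ^ (-(2:ℝ)/3) * f t)

/-- Iterated inverse: `𝔇⁻²ᵐ = 𝔇⁻² ∘ 𝔇⁻²⁽ᵐ⁻¹⁾`, with `𝔇⁰ = id`. -/
noncomputable def DinvIter : ℕ → (ℝ → ℝ) → ℝ → ℝ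
  | 0 => fun f => f
  | m + 1 => fun f => Dinv2 (DinvIter m f)

lemma rpow_intOn {Z r : ℝ} (hZ : 0 < Z) (hr : -1 < r) :
    IntegrableOn (fun t : ℝ => t ^ r) (Set.Ioc 0 Z) := by
  rw [integrableOn_Ioc_iff_integrableOn_Ioo]
  exact (intervalIntegral.integrableOn_Ioo_rpow_iff hZ).2 hr

lemma rpow_setInt {w r : ℝ} (hw : 0 ≤ w) (hr : -1 < r) :
    ∫ t in Set.Ioc (0:ℝ) w, t ^ r = w ^ (r + 1) / (r + 1) := by
  rw [← intervalIntegral.integral_of_le hw, integral_rpow (Or.inl hr),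
    Real.zero_rpow (by linarith), sub_zero]

lemma inner_pow {Z : ℝ} (hZ : 0 < Z) {g : ℝ → ℝ}
    (hg : AEMeasurable g (volume.restrict (Set.Ioc 0 Z)))
    {B a : ℝ} (hB : 0 ≤ B) (ha : -(1:ℝ)/3 < a)
    (hbound : ∀ t ∈ Set.Ioc (0:ℝ) Z, |g t| ≤ B * t ^ a) :
    IntegrableOn (fun t => t ^ (-(2:ℝ)/3) * g t) (Set.Ioc 0 Z) ∧
    ∀ w ∈ Set.Ioc (0:ℝ) Z,
      |∫ t in (0:ℝ)..w, t ^ (-(2:ℝ)/3) * g t| ≤ B / (a + 1/3) * w ^ (a + 1/3) := by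
  have hφint : IntegrableOn (fun t => B * t ^ (a - 2/3)) (Set.Ioc 0 Z) :=
    (rpow_intOn hZ (by linarith)).const_mul B
  have hmeas : AEStronglyMeasurable (fun t => t ^ (-(2:ℝ)/3) * g t)
      (volume.restrict (Set.Ioc 0 Z)) :=
    (((by fun_prop : Measurable fun t : ℝ => t ^ (-(2:ℝ)/3)).aemeasurable.mul hg)).aestronglyMeasurable
  have hdom : ∀ t ∈ Set.Ioc (0:ℝ) Z, ‖t ^ (-(2:ℝ)/3) * g t‖ ≤ B * t ^ (a - 2/3) := by
    intro t ht
    have ht0 : 0 < t := ht.1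
    have h1 : (0:ℝ) ≤ t ^ (-(2:ℝ)/3) := Real.rpow_nonneg ht0.le _
    rw [Real.norm_eq_abs, abs_mul, abs_of_nonneg h1]
    calc t ^ (-(2:ℝ)/3) * |g t| ≤ t ^ (-(2:ℝ)/3) * (B * t ^ a) :=
          mul_le_mul_of_nonneg_left (hbound t ht) h1
      _ = B * (t ^ (-(2:ℝ)/3) * t ^ a) := by ring
      _ = B * t ^ (a - 2/3) := by
          rw [← Real.rpow_add ht0, show -(2:ℝ)/3 + a = a - 2/3 by ring]
  have hint : IntegrableOn (fun t => t ^ (-(2:ℝ)/3) * g t) (Set.Ioc 0 Z) := by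
    refine Integrable.mono' hφint hmeas ?_
    exact (ae_restrict_iff' measurableSet_Ioc).2 (Filter.Eventually.of_forall hdom)
  refine ⟨hint, fun w hw => ?_⟩
  have hw0 : 0 < w := hw.1
  rw [intervalIntegral.integral_of_le hw0.le, ← Real.norm_eq_abs]
  have hsub : Set.Ioc (0:ℝ) w ⊆ Set.Ioc (0:ℝ) Z := Set.Ioc_subset_Ioc_right hw.2
  calc ‖∫ t in Set.Ioc (0:ℝ) w, t ^ (-(2:ℝ)/3) * g t‖
      ≤ ∫ t in Set.Ioc (0:ℝ) w, ‖t ^ (-(2:ℝ)/3) * g t‖ := norm_integral_le_integral_norm _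
    _ ≤ ∫ t in Set.Ioc (0:ℝ) w, B * t ^ (a - 2/3) := by
        refine setIntegral_mono_on ((hint.mono_set hsub).norm) (hφint.mono_set hsub)
          measurableSet_Ioc ?_
        intro t ht; exact hdom t (hsub ht)
    _ = B * (w ^ (a + 1/3) / (a + 1/3)) := by
        rw [integral_const_mul, rpow_setInt hw0.le (by linarith),
          show a - 2/3 + 1 = a + 1/3 by ring]
    _ = B / (a + 1/3) * w ^ (a + 1/3) := by ring

lemma outer_step {Z : ℝ} (hZ : 0 < Z) {g : ℝ → ℝ}
    (hint : IntegrableOn (fun t => t ^ (-(2:ℝ)/3) * g t) (Set.Ioc 0 Z))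
    {D b : ℝ} (hD : 0 ≤ D) (hb : -1 < b)
    (hbound : ∀ w ∈ Set.Ioc (0:ℝ) Z, |∫ t in (0:ℝ)..w, t ^ (-(2:ℝ)/3) * g t| ≤ D * w ^ b) :
    (∀ z ∈ Set.Ioc (0:ℝ) Z, |Dinv2 g z| ≤ D / (b + 1) * z ^ (b + 1/3)) ∧
    ContinuousOn (Dinv2 g) (Set.Ioc 0 Z) := by
  set H : ℝ → ℝ := fun w => ∫ t in (0:ℝ)..w, t ^ (-(2:ℝ)/3) * g t with hHdef
  have huIcc : Set.uIcc (0:ℝ) Z = Set.Icc 0 Z := Set.uIcc_of_le hZ.le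
  have hintIcc : IntegrableOn (fun t => t ^ (-(2:ℝ)/3) * g t) (Set.Icc 0 Z) := by
    rw [integrableOn_Icc_iff_integrableOn_Ioc]; exact hint
  have hHc : ContinuousOn H (Set.Icc 0 Z) := by
    have := intervalIntegral.continuousOn_primitive_interval (a := 0) (b := Z) (μ := volume)
      (f := fun t => t ^ (-(2:ℝ)/3) * g t) (by rwa [huIcc])
    rwa [huIcc] at this
  have hHint : IntegrableOn H (Set.Icc 0 Z) := hHc.integrableOn_Icc
  have key : ∀ z ∈ Set.Ioc (0:ℝ) Z, |∫ w in (0:ℝ)..z, H w| ≤ D * (z ^ (b + 1) / (b + 1)) := by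
    intro z hz
    rw [intervalIntegral.integral_of_le hz.1.le, ← Real.norm_eq_abs]
    have hsub : Set.Ioc (0:ℝ) z ⊆ Set.Icc 0 Z :=
      fun t ht => ⟨ht.1.le, ht.2.trans hz.2⟩
    calc ‖∫ w in Set.Ioc (0:ℝ) z, H w‖
        ≤ ∫ w in Set.Ioc (0:ℝ) z, ‖H w‖ := norm_integral_le_integral_norm _
      _ ≤ ∫ w in Set.Ioc (0:ℝ) z, D * w ^ b := by
          refine setIntegral_mono_on ((hHint.mono_set hsub).norm)
            ((rpow_intOn hz.1 hb).const_mul D) measurableSet_Ioc ?_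
          intro w hw
          rw [Real.norm_eq_abs]
          exact hbound w ⟨hw.1, hw.2.trans hz.2⟩
      _ = D * (z ^ (b + 1) / (b + 1)) := by
          rw [integral_const_mul, rpow_setInt hz.1.le hb]
  constructor
  · intro z hz
    have hz0 : 0 < z := hz.1
    have habs : |Dinv2 g z| = z ^ (-(2:ℝ)/3) * |∫ w in (0:ℝ)..z, H w| := by
      simp only [Dinv2, hHdef]
      rw [abs_mul, abs_of_nonneg (Real.rpow_nonneg hz0.le _)]
    rw [habs]
    calc z ^ (-(2:ℝ)/3) * |∫ w in (0:ℝ)..z, H w|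
        ≤ z ^ (-(2:ℝ)/3) * (D * (z ^ (b + 1) / (b + 1))) :=
          mul_le_mul_of_nonneg_left (key z hz) (Real.rpow_nonneg hz0.le _)
      _ = D / (b + 1) * (z ^ (-(2:ℝ)/3) * z ^ (b + 1)) := by ring
      _ = D / (b + 1) * z ^ (b + 1/3) := by
          rw [← Real.rpow_add hz0, show -(2:ℝ)/3 + (b + 1) = b + 1/3 by ring]
  · have hF : ContinuousOn (fun z => ∫ w in (0:ℝ)..z, H w) (Set.Icc 0 Z) := by
      have := intervalIntegral.continuousOn_primitive_interval (a := 0) (b := Z) (μ := volume)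
        (f := H) (by rwa [huIcc])
      rwa [huIcc] at this
    have hpow : ContinuousOn (fun z : ℝ => z ^ (-(2:ℝ)/3)) (Set.Ioc 0 Z) := fun z hz =>
      (Real.continuousAt_rpow_const z _ (Or.inl hz.1.ne')).continuousWithinAt
    exact hpow.mul (hF.mono Set.Ioc_subset_Icc_self)

lemma inner_CS {Z : ℝ} (hZ : 0 < Z) {f : ℝ → ℝ} (hf : Measurable f)
    (hfi : IntegrableOn (fun t => (f t) ^ 2 * t ^ (-(2:ℝ)/3)) (Set.Ioo 0 Z)) :
    IntegrableOn (fun t => t ^ (-(2:ℝ)/3) * f t) (Set.Ioc 0 Z) ∧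
    ∀ w ∈ Set.Ioc (0:ℝ) Z,
      |∫ t in (0:ℝ)..w, t ^ (-(2:ℝ)/3) * f t| ≤
        (Real.sqrt 3 * Real.sqrt (∫ t in Set.Ioo (0:ℝ) Z, (f t) ^ 2 * t ^ (-(2:ℝ)/3)))
          * w ^ ((1:ℝ)/6) := by
  set E := ∫ t in Set.Ioo (0:ℝ) Z, (f t) ^ 2 * t ^ (-(2:ℝ)/3) with hE
  set u : ℝ → ℝ := fun t => t ^ (-(1:ℝ)/3) with hu
  set v : ℝ → ℝ := fun t => t ^ (-(1:ℝ)/3) * f t with hv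
  have humeas : Measurable u := by fun_prop
  have hvmeas : Measurable v := (by fun_prop : Measurable fun t : ℝ => t ^ (-(1:ℝ)/3)).mul hf
  -- pointwise identities for t > 0
  have huv : ∀ t : ℝ, 0 < t → u t * v t = t ^ (-(2:ℝ)/3) * f t := by
    intro t ht
    simp only [hu, hv]
    rw [← mul_assoc, ← Real.rpow_add ht]
    norm_num
  have hu2 : ∀ t : ℝ, 0 < t → u t ^ 2 = t ^ (-(2:ℝ)/3) := by
    intro t ht
    simp only [hu]
    rw [← Real.rpow_natCast (t ^ (-(1:ℝ)/3)) 2, ← Real.rpow_mul ht.le]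
    norm_num
  have hv2 : ∀ t : ℝ, 0 < t → v t ^ 2 = (f t) ^ 2 * t ^ (-(2:ℝ)/3) := by
    intro t ht
    simp only [hv, mul_pow]
    rw [← Real.rpow_natCast (t ^ (-(1:ℝ)/3)) 2, ← Real.rpow_mul ht.le]
    norm_num; ring
  -- integrability of x^(-2/3) on Ioo 0 c for 0 < c
  have h23 : ∀ c : ℝ, 0 < c → IntegrableOn (fun t : ℝ => t ^ (-(2:ℝ)/3)) (Set.Ioo 0 c) :=
    fun c hc => (intervalIntegral.integrableOn_Ioo_rpow_iff hc).2 (by norm_num)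
  -- integrability of u * v on Ioo 0 Z via AM-GM
  have huvint : IntegrableOn (fun t => u t * v t) (Set.Ioo 0 Z) := by
    have hbd : IntegrableOn
        (fun t : ℝ => (t ^ (-(2:ℝ)/3) + (f t) ^ 2 * t ^ (-(2:ℝ)/3)) / 2) (Set.Ioo 0 Z) :=
      ((h23 Z hZ).add hfi).div_const 2
    refine Integrable.mono' hbd (humeas.mul hvmeas).aestronglyMeasurable ?_
    refine (ae_restrict_iff' measurableSet_Ioo).2 (Filter.Eventually.of_forall ?_)
    intro t ht
    have h1 : |u t * v t| ≤ (u t ^ 2 + v t ^ 2) / 2 := by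
      rw [abs_mul]
      nlinarith [sq_nonneg (|u t| - |v t|), sq_abs (u t), sq_abs (v t)]
    rw [Real.norm_eq_abs]
    calc |u t * v t| ≤ (u t ^ 2 + v t ^ 2) / 2 := h1
      _ = (t ^ (-(2:ℝ)/3) + (f t) ^ 2 * t ^ (-(2:ℝ)/3)) / 2 := by
          rw [hu2 t ht.1, hv2 t ht.1]
  have hIocint : IntegrableOn (fun t => t ^ (-(2:ℝ)/3) * f t) (Set.Ioc 0 Z) := by
    rw [integrableOn_Ioc_iff_integrableOn_Ioo]
    exact huvint.congr_fun (fun t ht => huv t ht.1) measurableSet_Ioo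
  refine ⟨hIocint, fun w hw => ?_⟩
  have hw0 : 0 < w := hw.1
  have hsub : Set.Ioo (0:ℝ) w ⊆ Set.Ioo 0 Z := Set.Ioo_subset_Ioo_right hw.2
  -- Memℒp facts on the restricted measure
  have hp2 : ENNReal.ofReal (2:ℝ) = 2 := by norm_num
  have hu_mem : MemLp u 2 (volume.restrict (Set.Ioo 0 w)) := by
    refine (memLp_two_iff_integrable_sq humeas.aestronglyMeasurable).2 ?_
    refine Integrable.congr ((h23 w hw0) : Integrable _ _) ?_
    exact (ae_restrict_iff' measurableSet_Ioo).2
      (Filter.Eventually.of_forall fun t ht => (hu2 t ht.1).symm)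
  have hv_mem : MemLp v 2 (volume.restrict (Set.Ioo 0 w)) := by
    refine (memLp_two_iff_integrable_sq hvmeas.aestronglyMeasurable).2 ?_
    refine Integrable.congr (hfi.mono_set hsub) ?_
    exact (ae_restrict_iff' measurableSet_Ioo).2
      (Filter.Eventually.of_forall fun t ht => (hv2 t ht.1).symm)
  have hpq : Real.HolderConjugate 2 2 := Real.holderConjugate_iff.mpr ⟨one_lt_two, by norm_num⟩
  have hnorm_sq : ∀ x : ℝ, ‖x‖ ^ (2:ℝ) = x ^ 2 := by
    intro x
    have h2 : ((2:ℕ):ℝ) = (2:ℝ) := by norm_num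
    rw [← h2, Real.rpow_natCast, Real.norm_eq_abs, sq_abs]
  have holder :
      ∫ t in Set.Ioo (0:ℝ) w, ‖u t‖ * ‖v t‖ ≤
        (∫ t in Set.Ioo (0:ℝ) w, ‖u t‖ ^ (2:ℝ)) ^ ((1:ℝ)/2) *
        (∫ t in Set.Ioo (0:ℝ) w, ‖v t‖ ^ (2:ℝ)) ^ ((1:ℝ)/2) := by
    have := MeasureTheory.integral_mul_norm_le_Lp_mul_Lq (f := u) (g := v) (μ := volume.restrict (Set.Ioo 0 w))
      hpq (by rwa [hp2]) (by rwa [hp2])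
    exact this
  -- identify the first factor
  have hufactor : (∫ t in Set.Ioo (0:ℝ) w, ‖u t‖ ^ (2:ℝ)) = 3 * w ^ ((1:ℝ)/3) := by
    have : ∀ t ∈ Set.Ioo (0:ℝ) w, ‖u t‖ ^ (2:ℝ) = t ^ (-(2:ℝ)/3) := by
      intro t ht
      rw [hnorm_sq, hu2 t ht.1]
    rw [setIntegral_congr_fun measurableSet_Ioo this, ← integral_Ioc_eq_integral_Ioo,
      rpow_setInt hw0.le (by norm_num), show -(2:ℝ)/3 + 1 = 1/3 by norm_num]
    ring
  have hvfactor : (∫ t in Set.Ioo (0:ℝ) w, ‖v t‖ ^ (2:ℝ)) ≤ E := by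
    have heq : ∀ t ∈ Set.Ioo (0:ℝ) w, ‖v t‖ ^ (2:ℝ) = (f t) ^ 2 * t ^ (-(2:ℝ)/3) := by
      intro t ht
      rw [hnorm_sq, hv2 t ht.1]
    rw [setIntegral_congr_fun measurableSet_Ioo heq]
    refine setIntegral_mono_set hfi ?_ (HasSubset.Subset.eventuallyLE hsub)
    refine (ae_restrict_iff' measurableSet_Ioo).2 (Filter.Eventually.of_forall ?_)
    intro t ht
    exact mul_nonneg (sq_nonneg _) (Real.rpow_nonneg ht.1.le _)
  have hvf_nonneg : 0 ≤ ∫ t in Set.Ioo (0:ℝ) w, ‖v t‖ ^ (2:ℝ) :=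
    setIntegral_nonneg measurableSet_Ioo fun t _ => Real.rpow_nonneg (norm_nonneg _) _
  -- main chain
  rw [intervalIntegral.integral_of_le hw0.le, integral_Ioc_eq_integral_Ioo, ← Real.norm_eq_abs]
  have hcong : ∫ t in Set.Ioo (0:ℝ) w, t ^ (-(2:ℝ)/3) * f t = ∫ t in Set.Ioo (0:ℝ) w, u t * v t :=
    setIntegral_congr_fun measurableSet_Ioo fun t ht => (huv t ht.1).symm
  rw [hcong]
  calc ‖∫ t in Set.Ioo (0:ℝ) w, u t * v t‖
      ≤ ∫ t in Set.Ioo (0:ℝ) w, ‖u t * v t‖ := norm_integral_le_integral_norm _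
    _ = ∫ t in Set.Ioo (0:ℝ) w, ‖u t‖ * ‖v t‖ := by
        refine setIntegral_congr_fun measurableSet_Ioo fun t _ => ?_
        exact norm_mul _ _
    _ ≤ (∫ t in Set.Ioo (0:ℝ) w, ‖u t‖ ^ (2:ℝ)) ^ ((1:ℝ)/2) *
        (∫ t in Set.Ioo (0:ℝ) w, ‖v t‖ ^ (2:ℝ)) ^ ((1:ℝ)/2) := holder
    _ ≤ (3 * w ^ ((1:ℝ)/3)) ^ ((1:ℝ)/2) * E ^ ((1:ℝ)/2) := by
        rw [hufactor]
        exact mul_le_mul_of_nonneg_left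
          (Real.rpow_le_rpow hvf_nonneg hvfactor (by norm_num))
          (Real.rpow_nonneg (by positivity) _)
    _ = (Real.sqrt 3 * Real.sqrt E) * w ^ ((1:ℝ)/6) := by
        rw [Real.mul_rpow (by norm_num) (Real.rpow_nonneg hw0.le _),
          ← Real.rpow_mul hw0.le, Real.sqrt_eq_rpow, Real.sqrt_eq_rpow]
        norm_num
        ring

lemma aux_bound (m : ℕ) (hm : 1 ≤ m) :
    ∃ C : ℝ, 0 < C ∧ ∀ Z : ℝ, 0 < Z → ∀ f : ℝ → ℝ, Measurable f →
      IntegrableOn (fun t => (f t) ^ 2 * t ^ (-(2:ℝ)/3)) (Set.Ioo 0 Z) →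
      (∀ z ∈ Set.Ioc (0:ℝ) Z,
        |DinvIter m f z| ≤
          C * Real.sqrt (∫ t in Set.Ioo (0:ℝ) Z, (f t) ^ 2 * t ^ (-(2:ℝ)/3)) *
            z ^ (2 * (m:ℝ)/3 - 1/6)) ∧
      ContinuousOn (DinvIter m f) (Set.Ioc 0 Z) := by
  induction m, hm using Nat.le_induction with
  | base =>
      refine ⟨Real.sqrt 3 / (1/6 + 1), by positivity, ?_⟩
      intro Z hZ f hf hfi
      obtain ⟨hint, hinner⟩ := inner_CS hZ hf hfi
      set E := ∫ t in Set.Ioo (0:ℝ) Z, (f t) ^ 2 * t ^ (-(2:ℝ)/3) with hE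
      have hD : (0:ℝ) ≤ Real.sqrt 3 * Real.sqrt E :=
        mul_nonneg (Real.sqrt_nonneg _) (Real.sqrt_nonneg _)
      obtain ⟨hbd, hcont⟩ := outer_step hZ hint hD (by norm_num : (-1:ℝ) < 1/6) hinner
      constructor
      · intro z hz
        have := hbd z hz
        have hexp : (1:ℝ)/6 + 1/3 = 2 * ((1:ℕ):ℝ)/3 - 1/6 := by norm_num
        rw [hexp] at this
        calc |DinvIter 1 f z| = |Dinv2 (DinvIter 0 f) z| := rfl
          _ ≤ Real.sqrt 3 * Real.sqrt E / (1/6 + 1) * z ^ (2 * ((1:ℕ):ℝ)/3 - 1/6) := this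
          _ = Real.sqrt 3 / (1/6 + 1) * Real.sqrt E * z ^ (2 * ((1:ℕ):ℝ)/3 - 1/6) := by ring
      · exact hcont
  | succ m hm ih =>
      obtain ⟨C, hC, hIH⟩ := ih
      set a : ℝ := 2 * (m:ℝ)/3 - 1/6 with ha
      have hm1 : (1:ℝ) ≤ (m:ℝ) := by exact_mod_cast hm
      have ha13 : (0:ℝ) < a + 1/3 := by rw [ha]; linarith
      have ha43 : (0:ℝ) < a + 1/3 + 1 := by linarith
      refine ⟨C / ((a + 1/3) * (a + 1/3 + 1)), by positivity, ?_⟩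
      intro Z hZ f hf hfi
      obtain ⟨hbIH, hcontIH⟩ := hIH Z hZ f hf hfi
      set E := ∫ t in Set.Ioo (0:ℝ) Z, (f t) ^ 2 * t ^ (-(2:ℝ)/3) with hE
      have hsqE : (0:ℝ) ≤ Real.sqrt E := Real.sqrt_nonneg _
      have hg : AEMeasurable (DinvIter m f) (volume.restrict (Set.Ioc 0 Z)) :=
        hcontIH.aemeasurable measurableSet_Ioc
      obtain ⟨hint, hinner⟩ := inner_pow hZ hg (B := C * Real.sqrt E) (a := a)
        (mul_nonneg hC.le hsqE) (by rw [ha]; linarith)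
        (fun t ht => by simpa using hbIH t ht)
      obtain ⟨hbd, hcont⟩ := outer_step hZ hint
        (D := C * Real.sqrt E / (a + 1/3)) (b := a + 1/3)
        (by positivity) (by linarith) hinner
      constructor
      · intro z hz
        have := hbd z hz
        have hexp : a + 1/3 + 1/3 = 2 * ((m:ℝ) + 1)/3 - 1/6 := by rw [ha]; ring
        have hexp2 : (((m + 1 : ℕ)):ℝ) = (m:ℝ) + 1 := by push_cast; ring
        calc |DinvIter (m + 1) f z| = |Dinv2 (DinvIter m f) z| := rfl
          _ ≤ C * Real.sqrt E / (a + 1/3) / (a + 1/3 + 1) * z ^ (a + 1/3 + 1/3) := this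
          _ = C / ((a + 1/3) * (a + 1/3 + 1)) * Real.sqrt E * z ^ (a + 1/3 + 1/3) := by
              field_simp
          _ = C / ((a + 1/3) * (a + 1/3 + 1)) * Real.sqrt E *
                z ^ (2 * (((m + 1 : ℕ)):ℝ)/3 - 1/6) := by rw [hexp, hexp2]
      · exact hcont

/-- Pointwise bound for the iterated inverse operator. -/
theorem inverse_operator_bound (m : ℕ) (hm : 1 ≤ m) :
    ∃ C > (0:ℝ), ∀ Z : ℝ, 0 < Z → ∀ f : ℝ → ℝ, Measurable f →
      IntegrableOn (fun t => (f t) ^ 2 * t ^ (-(2:ℝ)/3)) (Set.Ioo 0 Z) →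
      ∀ z ∈ Set.Ioc (0:ℝ) Z,
        |DinvIter m f z| ≤
          C * z ^ (2 * (m:ℝ)/3 - 1/6) *
            Real.sqrt (∫ t in Set.Ioo (0:ℝ) Z, (f t) ^ 2 * t ^ (-(2:ℝ)/3)) := by
  obtain ⟨C, hC, h⟩ := aux_bound m hm
  refine ⟨C, hC, fun Z hZ f hf hfi z hz => ?_⟩
  have := (h Z hZ f hf hfi).1 z hz
  calc |DinvIter m f z|
      ≤ C * Real.sqrt (∫ t in Set.Ioo (0:ℝ) Z, (f t) ^ 2 * t ^ (-(2:ℝ)/3)) *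
          z ^ (2 * (m:ℝ)/3 - 1/6) := this
    _ = C * z ^ (2 * (m:ℝ)/3 - 1/6) *
          Real.sqrt (∫ t in Set.Ioo (0:ℝ) Z, (f t) ^ 2 * t ^ (-(2:ℝ)/3)) := by ring
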